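/- arXiv:0808.1992 — 2 statements merged into one kernel-verified Lean document; each statement's English description precedes it below -/
import Mathlib

section
/- Every nonnegative n×n matrix A with λ(A) > 0 admits a positive vector x such that, for X = diag(x), the scaled matrix X⁻¹AX is strictly visualized: entries on critical edges equal λ(A) and all other entries are strictly less than λ(A). -/
open Finset

/-- Max-times matrix product: `(A ⊗ B) i j = max_k (A i k * B k j)`. -/
noncomputable def mProd {n : ℕ} (A B : Matrix (Fin n) (Fin n) NNReal) :
    Matrix (Fin n) (Fin n) NNReal :=
  fun i j => univ.sup fun k => A i k * B k j

/-- Max-algebraic matrix powers, `mPow A 0 = I`. -/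
noncomputable def mPow {n : ℕ} (A : Matrix (Fin n) (Fin n) NNReal) :
    ℕ → Matrix (Fin n) (Fin n) NNReal
  | 0 => fun i j => if i = j then 1 else 0
  | k + 1 => mProd (mPow A k) A

/-- Kleene star `A* = I ⊕ A ⊕ ... ⊕ A^{n-1}` in max algebra. -/
noncomputable def klStar {n : ℕ} (A : Matrix (Fin n) (Fin n) NNReal) :
    Matrix (Fin n) (Fin n) NNReal :=
  fun i j => (Finset.range n).sup fun k => mPow A k i j

/-- Partial "sums" `I ⊕ A ⊕ ... ⊕ A^m` of the Kleene star series. -/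
noncomputable def kPartial {n : ℕ} (A : Matrix (Fin n) (Fin n) NNReal) (m : ℕ) :
    Matrix (Fin n) (Fin n) NNReal :=
  fun i j => (Finset.range (m + 1)).sup fun k => mPow A k i j

/-- The weight of the cycle given by the list `l` (with wrap-around edge). -/
def cycleWeight {n : ℕ} (A : Matrix (Fin n) (Fin n) NNReal) (l : List (Fin n)) : NNReal :=
  ((l.zip (l.rotate 1)).map fun p => A p.1 p.2).prod

/-- The geometric mean of a cycle: `w(σ,A)^{1/k}`. -/
noncomputable def cycleMean {n : ℕ} (A : Matrix (Fin n) (Fin n) NNReal) (l : List (Fin n)) :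
    NNReal :=
  (cycleWeight A l) ^ ((l.length : ℝ)⁻¹)

/-- The maximum cycle geometric mean `λ(A)`. -/
noncomputable def maxCycleMean {n : ℕ} (A : Matrix (Fin n) (Fin n) NNReal) : NNReal :=
  sSup {x | ∃ l : List (Fin n), l ≠ [] ∧ x = cycleMean A l}

/-- `(i,j)` is a critical edge: it lies on a cycle attaining `λ(A)`. -/
def criticalEdge {n : ℕ} (A : Matrix (Fin n) (Fin n) NNReal) (i j : Fin n) : Prop :=
  ∃ l : List (Fin n), l ≠ [] ∧ cycleMean A l = maxCycleMean A ∧ (i, j) ∈ l.zip (l.rotate 1)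

/-- Max-algebraic matrix-vector product. -/
noncomputable def mVec {n : ℕ} (A : Matrix (Fin n) (Fin n) NNReal) (x : Fin n → NNReal) :
    Fin n → NNReal :=
  fun i => univ.sup fun j => A i j * x j

namespace Stmt17

variable {n : ℕ}

/-- Weight of a walk given as its list of vertices. -/
def pw (B : Matrix (Fin n) (Fin n) NNReal) (l : List (Fin n)) : NNReal :=
  ((l.zip l.tail).map fun p => B p.1 p.2).prod

@[simp] lemma pw_nil (B : Matrix (Fin n) (Fin n) NNReal) : pw B [] = 1 := rfl

@[simp] lemma pw_singleton (B : Matrix (Fin n) (Fin n) NNReal) (a : Fin n) :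
    pw B [a] = 1 := rfl

lemma pw_cons (B : Matrix (Fin n) (Fin n) NNReal) (a b : Fin n) (t : List (Fin n)) :
    pw B (a :: b :: t) = B a b * pw B (b :: t) := by
  simp [pw]

lemma zip_append_left {α β : Type*} : ∀ (l : List α) (t : List β) (l' : List α),
    t.length ≤ l.length → (l ++ l').zip t = l.zip t
  | _, [], _, _ => by simp
  | a :: l, b :: t, l', h => by
    simp only [List.cons_append, List.zip_cons_cons]
    rw [zip_append_left l t l' (by simpa using h)]
  | [], b :: t, l', h => by simp at h

lemma pw_append (B : Matrix (Fin n) (Fin n) NNReal) :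
    ∀ (u : List (Fin n)) (a : Fin n) (w : List (Fin n)),
    pw B (u ++ a :: w) = pw B (u ++ [a]) * pw B (a :: w)
  | [], a, w => by simp
  | [c], a, w => by
    simp only [List.cons_append, List.nil_append, pw_cons]
    simp [mul_assoc]
  | c :: d :: u, a, w => by
    have ih := pw_append B (d :: u) a w
    simp only [List.cons_append] at ih ⊢
    rw [pw_cons, pw_cons, ih, mul_assoc]

lemma pw_concat (B : Matrix (Fin n) (Fin n) NNReal) {u : List (Fin n)} {a : Fin n}
    (hu : u.getLast? = some a) (j : Fin n) :
    pw B (u ++ [j]) = pw B u * B a j := by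
  have hne : u ≠ [] := by rintro rfl; simp at hu
  rw [List.getLast?_eq_some_getLast hne, Option.some_inj] at hu
  have hdec : u.dropLast ++ [a] = u := by rw [← hu]; exact List.dropLast_append_getLast hne
  calc pw B (u ++ [j]) = pw B (u.dropLast ++ a :: [j]) := by
        conv_lhs => rw [← hdec]
        rw [List.append_assoc]
        rfl
    _ = pw B (u.dropLast ++ [a]) * pw B [a, j] := pw_append B _ a [j]
    _ = pw B u * B a j := by rw [hdec, pw_cons]; simp

lemma rotate_one_cons (a : Fin n) (t : List (Fin n)) :
    (a :: t).rotate 1 = t ++ [a] := by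
  have := List.rotate_cons_succ t a 0
  simpa using this

lemma cycleWeight_cons (B : Matrix (Fin n) (Fin n) NNReal) (a : Fin n) (t : List (Fin n)) :
    cycleWeight B (a :: t) = pw B (a :: t ++ [a]) := by
  unfold cycleWeight pw
  rw [rotate_one_cons]
  congr 1
  have : (a :: t ++ [a]) = (a :: t) ++ [a] := by simp
  rw [this]
  have h2 : (a :: t ++ [a]).tail = t ++ [a] := by simp
  rw [show ((a :: t) ++ [a]).tail = t ++ [a] from by simp]
  rw [zip_append_left (a :: t) (t ++ [a]) [a] (by simp)]

lemma pw_le_mPow (B : Matrix (Fin n) (Fin n) NNReal) :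
    ∀ (m : ℕ) (l : List (Fin n)) (i j : Fin n),
    l.length = m + 1 → l.head? = some i → l.getLast? = some j →
    pw B l ≤ mPow B m i j := by
  intro m
  induction m with
  | zero =>
    intro l i j hlen hh hl
    match l, hlen with
    | [a], _ =>
      simp only [List.head?_cons, Option.some_inj] at hh
      simp only [List.getLast?_singleton, Option.some_inj] at hl
      subst hh; subst hl
      simp [mPow, pw]
  | succ m ih =>
    intro l i j hlen hh hl
    have hne : l ≠ [] := by rintro rfl; simp at hlen
    have hdec : l.dropLast ++ [l.getLast hne] = l := List.dropLast_append_getLast hne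
    rw [List.getLast?_eq_some_getLast hne, Option.some_inj] at hl
    set u := l.dropLast with hu
    have hulen : u.length = m + 1 := by
      have := List.length_dropLast (xs := l)
      rw [hlen] at this; simpa [hu] using this
    have hune : u ≠ [] := by
      intro h; rw [h] at hulen; simp at hulen
    obtain ⟨k, hk⟩ : ∃ k, u.getLast? = some k :=
      ⟨u.getLast hune, List.getLast?_eq_some_getLast hune⟩
    have hhead : u.head? = some i := by
      rw [← hdec] at hh
      rwa [List.head?_append_of_ne_nil _ hune] at hh
    have hpw : pw B l = pw B u * B k j := by
      conv_lhs => rw [← hdec]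
      rw [hl] at hdec ⊢
      exact pw_concat B hk j
    rw [hpw]
    have h1 : pw B u ≤ mPow B m i k := ih u i k hulen hhead hk
    calc pw B u * B k j ≤ mPow B m i k * B k j := by
          exact mul_le_mul_left h1 _
      _ ≤ mPow B (m + 1) i j := by
          show _ ≤ mProd (mPow B m) B i j
          exact Finset.le_sup (f := fun k => mPow B m i k * B k j) (Finset.mem_univ k)

lemma mPow_attained (B : Matrix (Fin n) (Fin n) NNReal) :
    ∀ (m : ℕ) (i j : Fin n), mPow B m i j = 0 ∨
    ∃ l : List (Fin n), l.length = m + 1 ∧ l.head? = some i ∧ l.getLast? = some j ∧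
      pw B l = mPow B m i j := by
  intro m
  induction m with
  | zero =>
    intro i j
    by_cases h : i = j
    · subst h
      exact Or.inr ⟨[i], by simp, by simp, by simp, by simp [mPow, pw]⟩
    · exact Or.inl (by simp [mPow, h])
  | succ m ih =>
    intro i j
    have hne : (Finset.univ : Finset (Fin n)).Nonempty := ⟨i, Finset.mem_univ i⟩
    obtain ⟨k, -, hk⟩ := Finset.exists_mem_eq_sup Finset.univ hne
      (fun k => mPow B m i k * B k j)
    have hk' : mPow B (m + 1) i j = mPow B m i k * B k j := hk
    rcases ih i k with h0 | ⟨l, hlen, hh, hl, hpw⟩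
    · left; rw [hk', h0, zero_mul]
    · right
      have hlne : l ≠ [] := by rintro rfl; simp at hlen
      refine ⟨l ++ [j], by simp [hlen], ?_, ?_, ?_⟩
      · rwa [List.head?_append_of_ne_nil _ hlne]
      · simp
      · rw [pw_concat B hl j, hpw, hk']

lemma exists_dup_split : ∀ (p : List (Fin n)), ¬ p.Nodup →
    ∃ (v : Fin n) (s t u : List (Fin n)), p = s ++ v :: t ++ v :: u := by
  intro p
  induction p with
  | nil => intro h; exact absurd List.nodup_nil h
  | cons a q ih =>
    intro h
    rw [List.nodup_cons] at h
    push_neg at h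
    by_cases ha : a ∈ q
    · obtain ⟨t, u, rfl⟩ := List.append_of_mem ha
      exact ⟨a, [], t, u, by simp⟩
    · obtain ⟨v, s, t, u, rfl⟩ := ih (h ha)
      exact ⟨v, a :: s, t, u, by simp⟩

lemma head?_append_cons {α : Type*} (s : List α) (a : α) (w w' : List α) :
    (s ++ a :: w).head? = (s ++ a :: w').head? := by
  cases s <;> simp

lemma pw_le_klStar (B : Matrix (Fin n) (Fin n) NNReal)
    (hc : ∀ l : List (Fin n), l ≠ [] → cycleWeight B l ≤ 1) :
    ∀ (N : ℕ) (p : List (Fin n)) (i j : Fin n), p.length ≤ N → p ≠ [] →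
    p.head? = some i → p.getLast? = some j → pw B p ≤ klStar B i j := by
  intro N
  induction N with
  | zero => intro p i j hN hne _ _; exact absurd (List.length_eq_zero_iff.mp (Nat.le_zero.mp hN)) hne
  | succ N ih =>
    intro p i j hN hne hh hl
    by_cases hlen : p.length ≤ n
    · -- short path: use a power directly
      have h1 : 1 ≤ p.length := List.length_pos_iff.mpr hne
      have hplen : p.length = (p.length - 1) + 1 := by omega
      have hle : pw B p ≤ mPow B (p.length - 1) i j := pw_le_mPow B _ p i j hplen hh hl
      refine hle.trans ?_
      exact Finset.le_sup (f := fun k => mPow B k i j)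
        (Finset.mem_range.mpr (by omega))
    · -- long path: remove a cycle
      push_neg at hlen
      have hnodup : ¬ p.Nodup := by
        intro hd
        have := hd.length_le_card
        simp only [Fintype.card_fin] at this
        omega
      obtain ⟨v, s, t, u, rfl⟩ := exists_dup_split p hnodup
      have h1 : pw B (s ++ v :: t ++ v :: u) =
          pw B (s ++ [v]) * (pw B ((v :: t) ++ [v]) * pw B (v :: u)) := by
        rw [show s ++ v :: t ++ v :: u = s ++ v :: (t ++ v :: u) from by simp,
          pw_append B s v (t ++ v :: u),
          show v :: (t ++ v :: u) = (v :: t) ++ v :: u from by simp,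
          pw_append B (v :: t) v u]
      have hcyc : pw B ((v :: t) ++ [v]) ≤ 1 := by
        have := hc (v :: t) (by simp)
        rwa [cycleWeight_cons] at this
      have h2 : pw B (s ++ v :: t ++ v :: u) ≤ pw B (s ++ v :: u) := by
        rw [h1, pw_append B s v u]
        calc pw B (s ++ [v]) * (pw B ((v :: t) ++ [v]) * pw B (v :: u))
            ≤ pw B (s ++ [v]) * (1 * pw B (v :: u)) := by
              exact mul_le_mul_right (mul_le_mul_left hcyc _) _
          _ = pw B (s ++ [v]) * pw B (v :: u) := by rw [one_mul]
      refine h2.trans (ih (s ++ v :: u) i j ?_ (by simp) ?_ ?_)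
      · have : (s ++ v :: t ++ v :: u).length ≤ N + 1 := hN
        simp only [List.length_append, List.length_cons] at this ⊢
        omega
      · rw [← hh]; cases s <;> simp
      · rw [← hl, List.getLast?_append_cons,
          show s ++ v :: t ++ v :: u = (s ++ v :: t) ++ v :: u from by simp,
          List.getLast?_append_cons]

lemma zip_cycle_split : ∀ (t : List (Fin n)) (a c : Fin n),
    ∃ v : Fin n, (a :: t).getLast? = some v ∧
      (a :: t).zip (t ++ [c]) = (a :: t).zip t ++ [(v, c)] := by
  intro t
  induction t with
  | nil => intro a c; exact ⟨a, by simp, by simp⟩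
  | cons b r ih =>
    intro a c
    obtain ⟨v, hv, he⟩ := ih b c
    refine ⟨v, by rw [List.getLast?_cons_cons]; exact hv, ?_⟩
    simp only [List.cons_append, List.zip_cons_cons, he]

lemma mem_zip_tail_split {i j : Fin n} : ∀ (l : List (Fin n)),
    (i, j) ∈ l.zip l.tail → ∃ u w, l = u ++ i :: j :: w := by
  intro l
  induction l with
  | nil => intro h; simp [pw] at h
  | cons a t ih =>
    intro h
    match t, h with
    | b :: r, h =>
      simp only [List.tail_cons, List.zip_cons_cons, List.mem_cons] at h
      rcases h with h | h
      · obtain ⟨h1, h2⟩ := Prod.mk.injEq .. ▸ h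
        exact ⟨[], r, by simp_all⟩
      · obtain ⟨u, w, hw⟩ := ih (by simpa using h)
        exact ⟨a :: u, w, by simp [hw]⟩

lemma cycleWeight_of_path (B : Matrix (Fin n) (Fin n) NNReal) {p : List (Fin n)} {i j : Fin n}
    (hne : p ≠ []) (hh : p.head? = some j) (hl : p.getLast? = some i) :
    cycleWeight B (i :: p.dropLast) = B i j * pw B p := by
  rw [List.getLast?_eq_some_getLast hne, Option.some_inj] at hl
  have hdec : p.dropLast ++ [i] = p := by rw [← hl]; exact List.dropLast_append_getLast hne
  rw [cycleWeight_cons,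
    show (i :: p.dropLast) ++ [i] = i :: (p.dropLast ++ [i]) from by simp, hdec]
  obtain ⟨q, rfl⟩ : ∃ q, p = j :: q := by
    cases p with
    | nil => simp at hh
    | cons x q => simp only [List.head?_cons, Option.some_inj] at hh; exact ⟨q, by rw [hh]⟩
  exact pw_cons B i j q

lemma cycle_edge_path (B : Matrix (Fin n) (Fin n) NNReal) {l : List (Fin n)} {i j : Fin n}
    (hl : l ≠ []) (hmem : (i, j) ∈ l.zip (l.rotate 1)) :
    ∃ p : List (Fin n), p ≠ [] ∧ p.head? = some j ∧ p.getLast? = some i ∧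
      B i j * pw B p = cycleWeight B l := by
  obtain ⟨a, t, rfl⟩ : ∃ a t, l = a :: t := by
    cases l with
    | nil => exact absurd rfl hl
    | cons a t => exact ⟨a, t, rfl⟩
  rw [rotate_one_cons] at hmem
  obtain ⟨v, hv, he⟩ := zip_cycle_split t a a
  rw [he, List.mem_append] at hmem
  rcases hmem with hmem | hmem
  · have hmem' : (i, j) ∈ (a :: t).zip (a :: t).tail := by simpa using hmem
    obtain ⟨u, w, hw⟩ := mem_zip_tail_split (a :: t) hmem'
    cases u with
    | nil =>
      simp only [List.nil_append, List.cons.injEq] at hw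
      obtain ⟨rfl, rfl⟩ := hw
      refine ⟨j :: (w ++ [a]), by simp, by simp, ?_, ?_⟩
      · rw [show j :: (w ++ [a]) = (j :: w) ++ [a] from by simp]
        exact List.getLast?_concat
      · rw [cycleWeight_cons,
          show (a :: j :: w) ++ [a] = a :: j :: (w ++ [a]) from by simp, pw_cons]
    | cons c u' =>
      simp only [List.cons_append, List.cons.injEq] at hw
      obtain ⟨rfl, rfl⟩ := hw
      refine ⟨(j :: w) ++ a :: (u' ++ [i]), by simp, by simp, ?_, ?_⟩
      · rw [List.getLast?_append_cons,
          show a :: (u' ++ [i]) = (a :: u') ++ [i] from by simp]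
        exact List.getLast?_concat
      · rw [cycleWeight_cons, pw_append B (j :: w) a (u' ++ [i])]
        rw [show (a :: (u' ++ i :: j :: w)) ++ [a]
            = (a :: u') ++ i :: (j :: (w ++ [a])) from by simp,
          pw_append B (a :: u') i (j :: (w ++ [a])), pw_cons]
        rw [show a :: (u' ++ [i]) = (a :: u') ++ [i] from by simp]
        rw [show j :: (w ++ [a]) = (j :: w) ++ [a] from by simp]
        ring
  · simp only [List.mem_singleton, Prod.mk.injEq] at hmem
    obtain ⟨rfl, rfl⟩ := hmem
    refine ⟨j :: t, by simp, by simp, hv, ?_⟩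
    rw [cycleWeight_cons, pw_concat B hv j, mul_comm]

section Star
variable (B : Matrix (Fin n) (Fin n) NNReal)
  (hc : ∀ l : List (Fin n), l ≠ [] → cycleWeight B l ≤ 1) (hn : 0 < n)

include hc hn

omit hc in
lemma one_le_klStar_diag (i : Fin n) : 1 ≤ klStar B i i := by
  have h : mPow B 0 i i = 1 := by simp [mPow]
  calc (1 : NNReal) = mPow B 0 i i := h.symm
    _ ≤ _ := Finset.le_sup (f := fun k => mPow B k i i) (Finset.mem_range.mpr hn)

omit hc in
lemma klStar_attained (i j : Fin n) : klStar B i j = 0 ∨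
    ∃ p : List (Fin n), p ≠ [] ∧ p.head? = some i ∧ p.getLast? = some j ∧
      pw B p = klStar B i j := by
  obtain ⟨m, -, hm⟩ := Finset.exists_mem_eq_sup (Finset.range n)
    ⟨0, Finset.mem_range.mpr hn⟩ (fun k => mPow B k i j)
  have hm' : klStar B i j = mPow B m i j := hm
  rcases mPow_attained B m i j with h0 | ⟨l, hlen, hh, hl, hpw⟩
  · left; rw [hm', h0]
  · right
    exact ⟨l, by rintro rfl; simp at hlen, hh, hl, by rw [hpw, ← hm']⟩

lemma klStar_step (i j k : Fin n) : B i j * klStar B j k ≤ klStar B i k := by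
  rcases klStar_attained B hn j k with h0 | ⟨p, hne, hh, hl, hpw⟩
  · rw [h0, mul_zero]; exact zero_le
  · obtain ⟨q, rfl⟩ : ∃ q, p = j :: q := by
      cases p with
      | nil => simp at hh
      | cons x q => simp only [List.head?_cons, Option.some_inj] at hh; exact ⟨q, by rw [hh]⟩
    rw [← hpw, ← pw_cons B i j q]
    refine pw_le_klStar B hc (i :: j :: q).length _ i k le_rfl (by simp) (by simp) ?_
    rw [List.getLast?_cons_cons]; exact hl

lemma klStar_trans (i j k : Fin n) : klStar B j i * klStar B i k ≤ klStar B j k := by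
  rcases klStar_attained B hn j i with h0 | ⟨p₁, hne₁, hh₁, hl₁, hpw₁⟩
  · rw [h0, zero_mul]; exact zero_le
  rcases klStar_attained B hn i k with h0 | ⟨p₂, hne₂, hh₂, hl₂, hpw₂⟩
  · rw [h0, mul_zero]; exact zero_le
  obtain ⟨r, rfl⟩ : ∃ r, p₂ = i :: r := by
    cases p₂ with
    | nil => simp at hh₂
    | cons x r => simp only [List.head?_cons, Option.some_inj] at hh₂; exact ⟨r, by rw [hh₂]⟩
  rw [List.getLast?_eq_some_getLast hne₁, Option.some_inj] at hl₁
  have hdec : p₁.dropLast ++ [i] = p₁ := by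
    rw [← hl₁]; exact List.dropLast_append_getLast hne₁
  have hcomb : pw B (p₁ ++ r) = pw B p₁ * pw B (i :: r) := by
    conv_lhs => rw [← hdec, List.append_assoc]
    rw [show [i] ++ r = i :: r from rfl, pw_append B p₁.dropLast i r, hdec]
  rw [← hpw₁, ← hpw₂, ← hcomb]
  refine pw_le_klStar B hc (p₁ ++ r).length _ j k le_rfl (by simp [hne₁]) ?_ ?_
  · rw [List.head?_append_of_ne_nil _ hne₁]; exact hh₁
  · cases r with
    | nil =>
      have hk : i = k := by simpa using hl₂
      rw [List.append_nil, List.getLast?_eq_some_getLast hne₁, hl₁, hk]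
    | cons c r' =>
      rw [List.getLast?_append_cons, ← List.getLast?_cons_cons (a := i)]
      exact hl₂

lemma mul_klStar_le_one (i j : Fin n) : B i j * klStar B j i ≤ 1 := by
  rcases klStar_attained B hn j i with h0 | ⟨p, hne, hh, hl, hpw⟩
  · rw [h0, mul_zero]; exact zero_le
  · rw [← hpw, ← cycleWeight_of_path B hne hh hl]
    exact hc _ (by simp)

lemma crit_mul_klStar (i j : Fin n) {l : List (Fin n)} (hl : l ≠ [])
    (hw : cycleWeight B l = 1) (hmem : (i, j) ∈ l.zip (l.rotate 1)) :
    B i j * klStar B j i = 1 := by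
  refine le_antisymm (mul_klStar_le_one B hc hn i j) ?_
  obtain ⟨p, hne, hh, hlp, hpw⟩ := cycle_edge_path B hl hmem
  calc (1 : NNReal) = B i j * pw B p := by rw [hpw, hw]
    _ ≤ B i j * klStar B j i :=
      mul_le_mul_right (pw_le_klStar B hc p.length p j i le_rfl hne hh hlp) _

lemma crit_key (i j : Fin n) {l : List (Fin n)} (hl : l ≠ [])
    (hw : cycleWeight B l = 1) (hmem : (i, j) ∈ l.zip (l.rotate 1)) (k : Fin n) :
    klStar B i k ≤ B i j * klStar B j k := by
  have h1 : B i j * klStar B j i = 1 := crit_mul_klStar B hc hn i j hl hw hmem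
  calc klStar B i k = (B i j * klStar B j i) * klStar B i k := by rw [h1, one_mul]
    _ = B i j * (klStar B j i * klStar B i k) := by ring
    _ ≤ B i j * klStar B j k := mul_le_mul_right (klStar_trans B hc hn i j k) _

lemma key_converse (i j : Fin n) (h1 : 1 ≤ B i j * klStar B j i) :
    ∃ l : List (Fin n), l ≠ [] ∧ cycleWeight B l = 1 ∧ (i, j) ∈ l.zip (l.rotate 1) := by
  rcases klStar_attained B hn j i with h0 | ⟨p, hne, hh, hl, hpw⟩
  · rw [h0, mul_zero] at h1; exact absurd h1 (by simp)
  refine ⟨i :: p.dropLast, by simp, ?_, ?_⟩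
  · refine le_antisymm (hc _ (by simp)) ?_
    rw [cycleWeight_of_path B hne hh hl, hpw]
    exact h1
  · rw [rotate_one_cons]
    cases p with
    | nil => exact absurd rfl hne
    | cons x q =>
      have hx : x = j := by simpa using hh
      cases q with
      | nil =>
        have hxi : x = i := by simpa using hl
        rw [← hx, hxi]
        simp
      | cons y r =>
        rw [← hx]
        simp only [List.dropLast_cons₂, List.zip_cons_cons]
        exact List.mem_cons_self

end Star

lemma prod_map_mul_const {α : Type*} (g : α → NNReal) (c : NNReal) :
    ∀ zl : List α, (zl.map fun p => g p * c).prod = (zl.map g).prod * c ^ zl.length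
  | [] => by simp
  | a :: zl => by
    simp only [List.map_cons, List.prod_cons, prod_map_mul_const g c zl, List.length_cons,
      pow_succ]
    ring

lemma zip_rot_length (l : List (Fin n)) : (l.zip (l.rotate 1)).length = l.length := by
  simp

section Ascale
variable (A : Matrix (Fin n) (Fin n) NNReal)

lemma cycleMean_le_max {l : List (Fin n)} (hl : l ≠ []) :
    cycleMean A l ≤ maxCycleMean A := by
  set M := Finset.univ.sup fun i => Finset.univ.sup fun j => A i j with hM
  have hmean : ∀ l' : List (Fin n), l' ≠ [] → cycleMean A l' ≤ M := by
    intro l' hl'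
    have hw : cycleWeight A l' ≤ M ^ l'.length := by
      have h1 : ((l'.zip (l'.rotate 1)).map fun p => A p.1 p.2).prod ≤
          M ^ ((l'.zip (l'.rotate 1)).map fun p => A p.1 p.2).length := by
        refine List.prod_le_pow_card _ _ ?_
        intro x hx
        obtain ⟨p, -, rfl⟩ := List.mem_map.mp hx
        exact le_trans (Finset.le_sup (f := fun j => A p.1 j) (Finset.mem_univ p.2))
          (Finset.le_sup (f := fun i => Finset.univ.sup fun j => A i j) (Finset.mem_univ p.1))
      simpa [cycleWeight] using h1
    have hlen : (l'.length : ℝ) ≠ 0 := Nat.cast_ne_zero.mpr (by simpa using hl')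
    calc cycleMean A l' = (cycleWeight A l') ^ ((l'.length : ℝ)⁻¹) := rfl
      _ ≤ (M ^ l'.length) ^ ((l'.length : ℝ)⁻¹) := NNReal.rpow_le_rpow hw (by positivity)
      _ = (M ^ ((l'.length : ℕ) : ℝ)) ^ ((l'.length : ℝ)⁻¹) := by rw [NNReal.rpow_natCast]
      _ = M ^ (((l'.length : ℕ) : ℝ) * (l'.length : ℝ)⁻¹) := by rw [NNReal.rpow_mul]
      _ = M ^ (1 : ℝ) := by rw [mul_inv_cancel₀ hlen]
      _ = M := NNReal.rpow_one M
  refine le_csSup ⟨M, ?_⟩ ⟨l, hl, rfl⟩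
  rintro x ⟨l', hl', rfl⟩
  exact hmean l' hl'

lemma weight_le_pow {l : List (Fin n)} (hl : l ≠ []) :
    cycleWeight A l ≤ maxCycleMean A ^ l.length := by
  have h := cycleMean_le_max A hl
  have hlen : (l.length : ℝ) ≠ 0 := Nat.cast_ne_zero.mpr (by simpa using hl)
  have h2 : (cycleMean A l) ^ ((l.length : ℕ) : ℝ) ≤
      (maxCycleMean A) ^ ((l.length : ℕ) : ℝ) := NNReal.rpow_le_rpow h (by positivity)
  have h3 : (cycleMean A l) ^ ((l.length : ℕ) : ℝ) = cycleWeight A l := by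
    rw [cycleMean, ← NNReal.rpow_mul, inv_mul_cancel₀ hlen, NNReal.rpow_one]
  rwa [h3, NNReal.rpow_natCast] at h2

lemma mean_eq_of_weight {l : List (Fin n)} (hl : l ≠ [])
    (hw : cycleWeight A l = maxCycleMean A ^ l.length) :
    cycleMean A l = maxCycleMean A := by
  have hlen : (l.length : ℝ) ≠ 0 := Nat.cast_ne_zero.mpr (by simpa using hl)
  rw [cycleMean, hw, ← NNReal.rpow_natCast (maxCycleMean A) l.length, ← NNReal.rpow_mul,
    mul_inv_cancel₀ hlen, NNReal.rpow_one]

lemma weight_eq_of_mean {l : List (Fin n)} (hl : l ≠ [])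
    (hm : cycleMean A l = maxCycleMean A) :
    cycleWeight A l = maxCycleMean A ^ l.length := by
  have hlen : (l.length : ℝ) ≠ 0 := Nat.cast_ne_zero.mpr (by simpa using hl)
  have h3 : (cycleMean A l) ^ ((l.length : ℕ) : ℝ) = cycleWeight A l := by
    rw [cycleMean, ← NNReal.rpow_mul, inv_mul_cancel₀ hlen, NNReal.rpow_one]
  rw [← h3, hm, NNReal.rpow_natCast]

lemma cycleWeight_scale (c : NNReal) (l : List (Fin n)) :
    cycleWeight (fun i j => A i j * c) l = cycleWeight A l * c ^ l.length := by
  unfold cycleWeight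
  rw [prod_map_mul_const (fun p : Fin n × Fin n => A p.1 p.2) c, zip_rot_length]

lemma crit_iff (hlam : 0 < maxCycleMean A) (i j : Fin n) :
    criticalEdge A i j ↔ ∃ l : List (Fin n), l ≠ [] ∧
      cycleWeight (fun i j => A i j * (maxCycleMean A)⁻¹) l = 1 ∧
      (i, j) ∈ l.zip (l.rotate 1) := by
  have hinv : (maxCycleMean A)⁻¹ * maxCycleMean A = 1 := inv_mul_cancel₀ hlam.ne'
  constructor
  · rintro ⟨l, hl, hm, hmem⟩
    refine ⟨l, hl, ?_, hmem⟩
    rw [cycleWeight_scale, weight_eq_of_mean A hl hm, ← mul_pow, mul_comm, hinv, one_pow]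
  · rintro ⟨l, hl, hw, hmem⟩
    rw [cycleWeight_scale] at hw
    have hwa : cycleWeight A l = maxCycleMean A ^ l.length := by
      have h2 := congrArg (· * maxCycleMean A ^ l.length) hw
      simp only [mul_assoc, one_mul] at h2
      rwa [← mul_pow, hinv, one_pow, mul_one] at h2
    exact ⟨l, hl, mean_eq_of_weight A hl hwa, hmem⟩

lemma scaled_cycles_le_one (hlam : 0 < maxCycleMean A) {l : List (Fin n)} (hl : l ≠ []) :
    cycleWeight (fun i j => A i j * (maxCycleMean A)⁻¹) l ≤ 1 := by
  have hinv : (maxCycleMean A)⁻¹ * maxCycleMean A = 1 := inv_mul_cancel₀ hlam.ne'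
  rw [cycleWeight_scale]
  calc cycleWeight A l * (maxCycleMean A)⁻¹ ^ l.length
      ≤ maxCycleMean A ^ l.length * (maxCycleMean A)⁻¹ ^ l.length :=
        mul_le_mul_left (weight_le_pow A hl) _
    _ = 1 := by rw [← mul_pow, mul_comm, hinv, one_pow]

end Ascale

end Stmt17

/-- every `A` with `λ(A) > 0` admits a strict visualization
scaling by a positive vector. -/
theorem stmt_17 {n : ℕ} (A : Matrix (Fin n) (Fin n) NNReal)
    (hlam : 0 < maxCycleMean A) :
    ∃ x : Fin n → NNReal, (∀ i, 0 < x i) ∧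
      (∀ i j, criticalEdge A i j → (x i)⁻¹ * A i j * x j = maxCycleMean A) ∧
      (∀ i j, ¬ criticalEdge A i j → (x i)⁻¹ * A i j * x j < maxCycleMean A) := by
  classical
  rcases Nat.eq_zero_or_pos n with hn0 | hn
  · subst hn0
    exact ⟨fun _ => 1, fun i => i.elim0, fun i => i.elim0, fun i => i.elim0⟩
  set lam := maxCycleMean A with hlamdef
  set B : Matrix (Fin n) (Fin n) NNReal := fun i j => A i j * lam⁻¹ with hB
  have hBc : ∀ l : List (Fin n), l ≠ [] → cycleWeight B l ≤ 1 := fun l hl =>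
    Stmt17.scaled_cycles_le_one A hlam hl
  set S := klStar B with hS
  set x : Fin n → NNReal := fun i => ∑ k, S i k with hx
  have hxsum : ∀ i, x i = ∑ k, S i k := fun i => rfl
  have hxpos : ∀ i, 0 < x i := by
    intro i
    have h1 : (1 : NNReal) ≤ S i i := Stmt17.one_le_klStar_diag B hn i
    have h2 : S i i ≤ x i := Finset.single_le_sum (fun k _ => zero_le) (Finset.mem_univ i)
    exact lt_of_lt_of_le one_pos (h1.trans h2)
  have hstep : ∀ i j, B i j * x j ≤ x i := by
    intro i j
    rw [hxsum, hxsum]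
    calc B i j * ∑ k, S j k = ∑ k, B i j * S j k := Finset.mul_sum _ _ _
      _ ≤ ∑ k, S i k := Finset.sum_le_sum fun k _ => Stmt17.klStar_step B hBc hn i j k
  have hAeq : ∀ i j, A i j = lam * B i j := by
    intro i j
    show A i j = lam * (A i j * lam⁻¹)
    rw [mul_comm lam, mul_assoc, inv_mul_cancel₀ hlam.ne', mul_one]
  have hmain : ∀ i j, B i j * x j = x i → (x i)⁻¹ * A i j * x j = lam := by
    intro i j hEq
    have hxi := (hxpos i).ne'
    calc (x i)⁻¹ * A i j * x j = (x i)⁻¹ * (lam * B i j) * x j := by rw [← hAeq]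
      _ = lam * ((x i)⁻¹ * (B i j * x j)) := by ring
      _ = lam * ((x i)⁻¹ * x i) := by rw [hEq]
      _ = lam := by rw [inv_mul_cancel₀ hxi, mul_one]
  refine ⟨x, hxpos, ?_, ?_⟩
  · intro i j hcrit
    obtain ⟨l, hl, hw, hmem⟩ := (Stmt17.crit_iff A hlam i j).mp hcrit
    have hge : x i ≤ B i j * x j := by
      rw [hxsum, hxsum]
      calc ∑ k, S i k ≤ ∑ k, B i j * S j k := Finset.sum_le_sum fun k _ =>
            Stmt17.crit_key B hBc hn i j hl hw hmem k
        _ = B i j * ∑ k, S j k := (Finset.mul_sum _ _ _).symm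
    exact hmain i j (le_antisymm (hstep i j) hge)
  · intro i j hcrit
    have hne : B i j * x j ≠ x i := by
      intro hEq
      apply hcrit
      have hsum : ∑ k, B i j * S j k = ∑ k, S i k := by
        rw [← Finset.mul_sum]; exact hEq
      have hterm := (Finset.sum_eq_sum_iff_of_le
        (fun k _ => Stmt17.klStar_step B hBc hn i j k)).mp hsum
      have h1 : (1 : NNReal) ≤ B i j * S j i := by
        rw [hterm i (Finset.mem_univ i)]
        exact Stmt17.one_le_klStar_diag B hn i
      obtain ⟨l, hl, hw, hmem⟩ := Stmt17.key_converse B hBc hn i j h1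
      exact (Stmt17.crit_iff A hlam i j).mpr ⟨l, hl, hw, hmem⟩
    have hlt : B i j * x j < x i := lt_of_le_of_ne (hstep i j) hne
    have hxi := (hxpos i).ne'
    have hinvpos : 0 < (x i)⁻¹ := by
      simp only [pos_iff_ne_zero, ne_eq, inv_eq_zero]
      exact hxi
    calc (x i)⁻¹ * A i j * x j = lam * ((x i)⁻¹ * (B i j * x j)) := by
          rw [hAeq]; ring
      _ < lam * ((x i)⁻¹ * x i) :=
          mul_lt_mul_of_pos_left (mul_lt_mul_of_pos_left hlt hinvpos) hlam
      _ = lam := by rw [inv_mul_cancel₀ hxi, mul_one]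
end

section
/- Let A be definite and visualized, and let N₁,...,N_m be the node sets of the strongly connected components of the critical digraph extended with all loops, C*(A). Then for i ∈ N_μ, j ∈ N_ν, the Kleene star entry satisfies a*_ij = α*_{μν}, where α*_{μν} is the (μ,ν)-entry of the Kleene star of the m×m matrix A^C with entries α_{μν} = max{a_ij : i ∈ N_μ, j ∈ N_ν}. In particular each (μ,ν)-block of A* is constant. -/
open Finset

/-- weight of a walk -/
def wt {N : ℕ} (B : Matrix (Fin N) (Fin N) NNReal) : List (Fin N) → NNReal
  | [] => 1
  | [_] => 1
  | a :: b :: t => B a b * wt B (b :: t)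

@[simp] lemma wt_nil {N : ℕ} (B : Matrix (Fin N) (Fin N) NNReal) : wt B [] = 1 := rfl
@[simp] lemma wt_single {N : ℕ} (B : Matrix (Fin N) (Fin N) NNReal) (a : Fin N) :
    wt B [a] = 1 := rfl
@[simp] lemma wt_cons_cons {N : ℕ} (B : Matrix (Fin N) (Fin N) NNReal) (a b : Fin N)
    (t : List (Fin N)) : wt B (a :: b :: t) = B a b * wt B (b :: t) := rfl

lemma wt_split {N : ℕ} (B : Matrix (Fin N) (Fin N) NNReal) :
    ∀ (xs : List (Fin N)) (a : Fin N) (ys : List (Fin N)),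
      wt B (xs ++ a :: ys) = wt B (xs ++ [a]) * wt B (a :: ys)
  | [], a, ys => by simp
  | [x], a, ys => by simp [mul_assoc]
  | x :: y :: xs, a, ys => by
      have ih := wt_split B (y :: xs) a ys
      simp only [List.cons_append] at ih ⊢
      rw [wt_cons_cons, wt_cons_cons, ih, mul_assoc]

lemma wt_le_one {N : ℕ} {B : Matrix (Fin N) (Fin N) NNReal} (hB : ∀ a b, B a b ≤ 1) :
    ∀ l : List (Fin N), wt B l ≤ 1
  | [] => le_refl _
  | [_] => le_refl _
  | a :: b :: t => by
      calc B a b * wt B (b :: t) ≤ 1 * 1 := mul_le_mul' (hB a b) (wt_le_one hB (b :: t))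
      _ = 1 := by simp

lemma wt_concat {N : ℕ} (B : Matrix (Fin N) (Fin N) NNReal) :
    ∀ (l : List (Fin N)) (i b q : Fin N), (i :: l).getLast? = some b →
      wt B ((i :: l) ++ [q]) = wt B (i :: l) * B b q
  | [], i, b, q, h => by
      simp only [List.getLast?_singleton, Option.some_inj] at h
      subst h; simp [mul_comm]
  | x :: t, i, b, q, h => by
      rw [List.getLast?_cons_cons] at h
      have ih := wt_concat B t x b q h
      simp only [List.cons_append] at ih ⊢
      rw [wt_cons_cons, wt_cons_cons, ih, mul_assoc]

lemma mProd_id_left {n : ℕ} (A : Matrix (Fin n) (Fin n) NNReal) :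
    mProd (mPow A 0) A = A := by
  funext i j
  refine le_antisymm (Finset.sup_le fun k _ => ?_) ?_
  · by_cases h : i = k <;> simp [mPow, h]
  · calc A i j = mPow A 0 i i * A i j := by simp [mPow]
    _ ≤ _ := Finset.le_sup (f := fun k => mPow A 0 i k * A k j) (mem_univ i)

lemma mProd_id_right {n : ℕ} (A : Matrix (Fin n) (Fin n) NNReal) :
    mProd A (mPow A 0) = A := by
  funext i j
  refine le_antisymm (Finset.sup_le fun k _ => ?_) ?_
  · by_cases h : k = j <;> simp [mPow, h]
  · calc A i j = A i j * mPow A 0 j j := by simp [mPow]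
    _ ≤ _ := Finset.le_sup (f := fun k => A i k * mPow A 0 k j) (mem_univ j)

lemma mProd_assoc {n : ℕ} (A B C : Matrix (Fin n) (Fin n) NNReal) :
    mProd (mProd A B) C = mProd A (mProd B C) := by
  funext i j
  show (univ.sup fun k => (univ.sup fun p => A i p * B p k) * C k j) =
    univ.sup fun p => A i p * univ.sup fun k => B p k * C k j
  calc (univ.sup fun k => (univ.sup fun p => A i p * B p k) * C k j)
      = univ.sup fun k => univ.sup fun p => A i p * B p k * C k j := by
        refine Finset.sup_congr rfl fun k _ => ?_
        rw [NNReal.finset_sup_mul]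
    _ = univ.sup fun p => univ.sup fun k => A i p * (B p k * C k j) := by
        rw [Finset.sup_comm]
        simp [mul_assoc]
    _ = univ.sup fun p => A i p * univ.sup fun k => B p k * C k j := by
        refine Finset.sup_congr rfl fun p _ => ?_
        rw [NNReal.mul_finset_sup]

lemma mPow_succ_left {n : ℕ} (A : Matrix (Fin n) (Fin n) NNReal) (k : ℕ) :
    mPow A (k + 1) = mProd A (mPow A k) := by
  induction k with
  | zero => show mProd (mPow A 0) A = mProd A (mPow A 0); rw [mProd_id_left, mProd_id_right]
  | succ k ih =>
      show mProd (mPow A (k+1)) A = mProd A (mPow A (k+1))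
      conv_lhs => rw [ih]
      rw [mProd_assoc]
      rfl

/-- walk weight is at most the corresponding matrix power entry -/
lemma wt_le_mPow {N : ℕ} (B : Matrix (Fin N) (Fin N) NNReal) :
    ∀ (l : List (Fin N)) (i j : Fin N), (i :: l).getLast? = some j →
      wt B (i :: l) ≤ mPow B l.length i j
  | [], i, j, h => by
      simp only [List.getLast?_singleton, Option.some_inj] at h
      subst h; simp [mPow]
  | p :: t, i, j, h => by
      rw [List.getLast?_cons_cons] at h
      calc wt B (i :: p :: t) = B i p * wt B (p :: t) := rfl
        _ ≤ B i p * mPow B t.length p j := mul_le_mul' le_rfl (wt_le_mPow B t p j h)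
        _ ≤ mPow B (t.length + 1) i j := by
            rw [mPow_succ_left]
            show _ ≤ univ.sup fun q => B i q * mPow B t.length q j
            exact Finset.le_sup (f := fun q => B i q * mPow B t.length q j) (mem_univ p)

lemma mPow_one_le {N : ℕ} (B : Matrix (Fin N) (Fin N) NNReal) (i j : Fin N) :
    mPow B 1 i j ≤ B i j := by
  show (univ.sup fun p => mPow B 0 i p * B p j) ≤ B i j
  refine Finset.sup_le fun p _ => ?_
  by_cases h : i = p <;> simp [mPow, h]

/-- attainment: every matrix power entry (positive exponent) is achieved by a walk -/
lemma exists_walk {N : ℕ} (B : Matrix (Fin N) (Fin N) NNReal) :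
    ∀ (k : ℕ) (i j : Fin N), ∃ l : List (Fin N), l.length = k + 1 ∧
      (i :: l).getLast? = some j ∧ mPow B (k + 1) i j ≤ wt B (i :: l) := by
  intro k
  induction k with
  | zero =>
      intro i j
      exact ⟨[j], rfl, by simp, by simpa using mPow_one_le B i j⟩
  | succ k ih =>
      intro i j
      have hne : (univ : Finset (Fin N)).Nonempty := ⟨i, mem_univ i⟩
      obtain ⟨p, -, hp⟩ := Finset.exists_mem_eq_sup univ hne
        (fun q => B i q * mPow B (k + 1) q j)
      obtain ⟨l, hlen, hlast, hle⟩ := ih p j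
      refine ⟨p :: l, by simp [hlen], by rw [List.getLast?_cons_cons]; exact hlast, ?_⟩
      calc mPow B (k + 2) i j = B i p * mPow B (k + 1) p j := by
            rw [mPow_succ_left]; exact hp
        _ ≤ B i p * wt B (p :: l) := mul_le_mul' le_rfl hle
        _ = wt B (i :: p :: l) := rfl

lemma exists_dup {α : Type*} : ∀ {l : List α}, ¬ l.Nodup →
    ∃ (a : α) (xs ys zs : List α), l = xs ++ a :: ys ++ a :: zs := by
  intro l
  induction l with
  | nil => intro h; exact absurd List.nodup_nil h
  | cons x t ih =>
      intro h
      rw [List.nodup_cons] at h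
      push_neg at h
      by_cases hx : x ∈ t
      · obtain ⟨ys, zs, rfl⟩ := List.append_of_mem hx
        exact ⟨x, [], ys, zs, rfl⟩
      · obtain ⟨a, xs, ys, zs, rfl⟩ := ih (h hx)
        exact ⟨a, x :: xs, ys, zs, rfl⟩

/-- cycle removal: walk weights are bounded by the Kleene star when all entries ≤ 1 -/
lemma wt_le_klStar {N : ℕ} {B : Matrix (Fin N) (Fin N) NNReal} (hB : ∀ a b, B a b ≤ 1) :
    ∀ (l : List (Fin N)) (i j : Fin N), (i :: l).getLast? = some j →
      wt B (i :: l) ≤ klStar B i j := by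
  have main : ∀ (K : ℕ) (l : List (Fin N)), l.length ≤ K → ∀ (i j : Fin N),
      (i :: l).getLast? = some j → wt B (i :: l) ≤ klStar B i j := by
    intro K
    induction K with
    | zero =>
        intro l hl i j hlast
        rw [List.length_eq_zero_iff.mp (Nat.le_zero.mp hl)] at hlast ⊢
        calc wt B [i] ≤ mPow B ([] : List (Fin N)).length i j := wt_le_mPow B [] i j hlast
          _ ≤ klStar B i j := by
            show _ ≤ (Finset.range N).sup fun k => mPow B k i j
            exact Finset.le_sup (f := fun k => mPow B k i j) (Finset.mem_range.mpr i.pos)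
    | succ K ih =>
        intro l hl i j hlast
        by_cases hsmall : l.length < N
        · calc wt B (i :: l) ≤ mPow B l.length i j := wt_le_mPow B l i j hlast
            _ ≤ klStar B i j := by
              show _ ≤ (Finset.range N).sup fun k => mPow B k i j
              exact Finset.le_sup (f := fun k => mPow B k i j) (Finset.mem_range.mpr hsmall)
        · -- pigeonhole: the walk i :: l has length > N, so it repeats a vertex
          push_neg at hsmall
          have hnd : ¬ (i :: l).Nodup := by
            intro hnd
            have := hnd.length_le_card
            simp only [List.length_cons, Fintype.card_fin] at this
            omega
          obtain ⟨a, xs, ys, zs, hdec⟩ := exists_dup hnd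
          cases xs with
          | nil =>
              simp only [List.nil_append, List.cons.injEq] at hdec
              obtain ⟨rfl, rfl⟩ := hdec
              have hlast2 : ((i :: ys) ++ i :: zs).getLast? = some j := hlast
              rw [List.getLast?_append_cons] at hlast2
              have hlen : zs.length ≤ K := by
                have h2 : (ys ++ i :: zs).length ≤ K + 1 := hl
                simp only [List.length_append, List.length_cons] at h2
                omega
              show wt B ((i :: ys) ++ i :: zs) ≤ klStar B i j
              calc wt B ((i :: ys) ++ i :: zs)
                  = wt B ((i :: ys) ++ [i]) * wt B (i :: zs) := wt_split B (i :: ys) i zs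
                _ ≤ 1 * wt B (i :: zs) := mul_le_mul' (wt_le_one hB _) le_rfl
                _ = wt B (i :: zs) := one_mul _
                _ ≤ klStar B i j := ih zs hlen i j hlast2
          | cons x xs =>
              simp only [List.cons_append, List.cons.injEq] at hdec
              obtain ⟨rfl, rfl⟩ := hdec
              have hlast2 : (((i :: xs) ++ a :: ys) ++ a :: zs).getLast? = some j := hlast
              rw [List.getLast?_append_cons] at hlast2
              have hlast' : ((xs ++ a :: zs)).length ≤ K ∧
                  (i :: (xs ++ a :: zs)).getLast? = some j := by
                constructor
                · have h2 : ((xs ++ a :: ys) ++ a :: zs).length ≤ K + 1 := hl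
                  simp only [List.length_append, List.length_cons] at h2 ⊢
                  omega
                · show ((i :: xs) ++ a :: zs).getLast? = some j
                  rw [List.getLast?_append_cons]
                  exact hlast2
              show wt B (((i :: xs) ++ a :: ys) ++ a :: zs) ≤ klStar B i j
              calc wt B (((i :: xs) ++ a :: ys) ++ a :: zs)
                  = wt B (((i :: xs) ++ a :: ys) ++ [a]) * wt B (a :: zs) :=
                    wt_split B ((i :: xs) ++ a :: ys) a zs
                _ = (wt B ((i :: xs) ++ [a]) * wt B (a :: (ys ++ [a]))) * wt B (a :: zs) := by
                    rw [show ((i :: xs) ++ a :: ys) ++ [a] = (i :: xs) ++ a :: (ys ++ [a]) by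
                      simp, wt_split B (i :: xs) a (ys ++ [a])]
                _ ≤ (wt B ((i :: xs) ++ [a]) * 1) * wt B (a :: zs) :=
                    mul_le_mul' (mul_le_mul' le_rfl (wt_le_one hB _)) le_rfl
                _ = wt B ((i :: xs) ++ [a]) * wt B (a :: zs) := by rw [mul_one]
                _ = wt B ((i :: xs) ++ a :: zs) := (wt_split B (i :: xs) a zs).symm
                _ ≤ klStar B i j := ih (xs ++ a :: zs) hlast'.1 i j hlast'.2
  intro l i j h
  exact main l.length l le_rfl i j h

/-- every power is dominated by the Kleene star, for matrices with entries ≤ 1 -/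
lemma mPow_le_klStar {N : ℕ} {B : Matrix (Fin N) (Fin N) NNReal} (hB : ∀ a b, B a b ≤ 1)
    (k : ℕ) (i j : Fin N) : mPow B k i j ≤ klStar B i j := by
  cases k with
  | zero =>
      show _ ≤ (Finset.range N).sup fun k => mPow B k i j
      exact Finset.le_sup (f := fun k => mPow B k i j) (Finset.mem_range.mpr i.pos)
  | succ k =>
      obtain ⟨l, -, hlast, hle⟩ := exists_walk B k i j
      exact hle.trans (wt_le_klStar hB l i j hlast)

lemma mPow_map {n m : ℕ} (A : Matrix (Fin n) (Fin n) NNReal)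
    (Ac : Matrix (Fin m) (Fin m) NNReal) (f : Fin n → Fin m)
    (hedge : ∀ p q, A p q ≤ Ac (f p) (f q)) :
    ∀ (k : ℕ) (i j : Fin n), mPow A k i j ≤ mPow Ac k (f i) (f j) := by
  intro k
  induction k with
  | zero =>
      intro i j
      by_cases h : i = j
      · subst h; simp [mPow]
      · simp [mPow, h]
  | succ k ih =>
      intro i j
      show (univ.sup fun p => mPow A k i p * A p j) ≤ mPow Ac (k + 1) (f i) (f j)
      refine Finset.sup_le fun p _ => ?_
      calc mPow A k i p * A p j ≤ mPow Ac k (f i) (f p) * Ac (f p) (f j) :=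
            mul_le_mul' (ih i p) (hedge p j)
        _ ≤ mPow Ac (k + 1) (f i) (f j) := by
            show _ ≤ univ.sup fun μ => mPow Ac k (f i) μ * Ac μ (f j)
            exact Finset.le_sup (f := fun μ => mPow Ac k (f i) μ * Ac μ (f j))
              (mem_univ (f p))

/-- for a definite visualized matrix, the Kleene star is constant
on each pair of strongly connected components of `C*(A)`, with value given by
the Kleene star of the reduced `m × m` matrix `A^C`. -/
theorem stmt_18 {n m : ℕ} (A : Matrix (Fin n) (Fin n) NNReal)
    (hdef : maxCycleMean A = 1)
    (hvis : ∀ i j, (criticalEdge A i j → A i j = 1) ∧ A i j ≤ 1)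
    (f : Fin n → Fin m) (hf : Function.Surjective f)
    (hscc : ∀ i j, f i = f j ↔
      (Relation.ReflTransGen (criticalEdge A) i j ∧
        Relation.ReflTransGen (criticalEdge A) j i))
    (Ac : Matrix (Fin m) (Fin m) NNReal)
    (hAc : ∀ μ ν, Ac μ ν =
      univ.sup fun i => univ.sup fun j => if f i = μ ∧ f j = ν then A i j else 0) :
    ∀ i j, klStar A i j = klStar Ac (f i) (f j) := by
  intro i j
  have hA1 : ∀ a b, A a b ≤ 1 := fun a b => (hvis a b).2
  have hAc1 : ∀ μ ν, Ac μ ν ≤ 1 := by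
    intro μ ν
    rw [hAc]
    refine Finset.sup_le fun p _ => Finset.sup_le fun q _ => ?_
    split_ifs
    · exact (hvis p q).2
    · exact zero_le
  have hedge : ∀ p q, A p q ≤ Ac (f p) (f q) := by
    intro p q
    rw [hAc]
    refine le_trans ?_ (Finset.le_sup
      (f := fun i' => univ.sup fun j' => if f i' = f p ∧ f j' = f q then A i' j' else 0)
      (mem_univ p))
    refine le_trans ?_ (Finset.le_sup
      (f := fun j' => if f p = f p ∧ f j' = f q then A p j' else 0) (mem_univ q))
    simp
  have crit : ∀ p q : Fin n, Relation.ReflTransGen (criticalEdge A) p q →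
      ∃ l, (p :: l).getLast? = some q ∧ wt A (p :: l) = 1 := by
    intro p q h
    induction h with
    | refl => exact ⟨[], by simp, rfl⟩
    | @tail b c h₁ hbc ih =>
        obtain ⟨l, hlast, hwt⟩ := ih
        refine ⟨l ++ [c], by simpa using List.getLast?_concat (l := p :: l), ?_⟩
        have hc := wt_concat A l p b c hlast
        rw [hwt, (hvis b c).1 hbc, mul_one] at hc
        exact hc
  have attain : ∀ μ ν : Fin m, Ac μ ν = 0 ∨
      ∃ p q : Fin n, f p = μ ∧ f q = ν ∧ A p q = Ac μ ν := by
    intro μ ν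
    by_cases h0 : Ac μ ν = 0
    · exact Or.inl h0
    right
    have hne : (univ : Finset (Fin n)).Nonempty := ⟨i, mem_univ i⟩
    obtain ⟨p, -, hp⟩ := Finset.exists_mem_eq_sup univ hne
      (fun i' => univ.sup fun j' => if f i' = μ ∧ f j' = ν then A i' j' else 0)
    obtain ⟨q, -, hq⟩ := Finset.exists_mem_eq_sup univ hne
      (fun j' => if f p = μ ∧ f j' = ν then A p j' else 0)
    have hval : Ac μ ν = if f p = μ ∧ f q = ν then A p q else 0 := by
      rw [hAc, hp, hq]
    by_cases hc : f p = μ ∧ f q = ν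
    · exact ⟨p, q, hc.1, hc.2, by rw [hval, if_pos hc]⟩
    · exact absurd (by rw [hval, if_neg hc]) h0
  have lift : ∀ (L : List (Fin m)) (p j' : Fin n), (f p :: L).getLast? = some (f j') →
      ∃ l, (p :: l).getLast? = some j' ∧ wt Ac (f p :: L) ≤ wt A (p :: l) := by
    intro L
    induction L with
    | nil =>
        intro p j' h
        simp only [List.getLast?_singleton, Option.some_inj] at h
        obtain ⟨l, hl, hw⟩ := crit p j' ((hscc p j').mp h).1
        exact ⟨l, hl, by simp [hw]⟩
    | cons ν L' ih =>
        intro p j' h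
        rw [List.getLast?_cons_cons] at h
        rcases attain (f p) ν with h0 | ⟨p', q, hfp', hfq, hval⟩
        · refine ⟨[j'], by simp, ?_⟩
          rw [wt_cons_cons, h0, zero_mul]
          exact zero_le
        · obtain ⟨l₁, hl₁, hw₁⟩ := crit p p' ((hscc p p').mp hfp'.symm).1
          have hq' : (f q :: L').getLast? = some (f j') := by rw [hfq]; exact h
          obtain ⟨l₂, hl₂, hw₂⟩ := ih q j' hq'
          rw [hfq] at hw₂
          refine ⟨l₁ ++ q :: l₂, ?_, ?_⟩
          · show ((p :: l₁) ++ q :: l₂).getLast? = some j'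
            rw [List.getLast?_append_cons]
            exact hl₂
          · show wt Ac (f p :: ν :: L') ≤ wt A ((p :: l₁) ++ q :: l₂)
            calc wt Ac (f p :: ν :: L') = Ac (f p) ν * wt Ac (ν :: L') := rfl
              _ ≤ A p' q * wt A (q :: l₂) := mul_le_mul' (le_of_eq hval.symm) hw₂
              _ = wt A ((p :: l₁) ++ q :: l₂) := by
                  rw [wt_split A (p :: l₁) q l₂, wt_concat A l₁ p p' q hl₁, hw₁, one_mul]
  apply le_antisymm
  · show ((Finset.range n).sup fun k => mPow A k i j) ≤ klStar Ac (f i) (f j)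
    refine Finset.sup_le fun k _ => ?_
    exact (mPow_map A Ac f hedge k i j).trans (mPow_le_klStar hAc1 k (f i) (f j))
  · show ((Finset.range m).sup fun k => mPow Ac k (f i) (f j)) ≤ klStar A i j
    refine Finset.sup_le fun k _ => ?_
    cases k with
    | zero =>
        by_cases hfe : f i = f j
        · have h1 : mPow Ac 0 (f i) (f j) = 1 := by simp [mPow, hfe]
          obtain ⟨l, hl, hw⟩ := crit i j ((hscc i j).mp hfe).1
          rw [h1, ← hw]
          exact wt_le_klStar hA1 l i j hl
        · have h1 : mPow Ac 0 (f i) (f j) = 0 := by simp [mPow, hfe]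
          rw [h1]
          exact zero_le
    | succ k =>
        obtain ⟨L, -, hlast, hle⟩ := exists_walk Ac k (f i) (f j)
        obtain ⟨l, hl, hw⟩ := lift L i j hlast
        exact hle.trans (hw.trans (wt_le_klStar hA1 l i j hl))
end
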